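/- arXiv:1903.11822 — 2 statements merged into one kernel-verified Lean document; each statement's English description precedes it below -/
import Mathlib

section
/- Let $q>1$, $p=1$. Suppose $c,\underline{k}:[0,\infty)\to[0,\infty)$ are continuous, and suppose there exist $\beta>0$, $c_6>0$, and $T_0>1$ such that $c(t)\ge \beta/t$ and $\underline{k}(t)\ge c_6\, t^{-(\beta(q-1)+2)}(\ln t)^{-1}$ for all $t\ge T_0$. Then $\int_{T_0}^\infty t^{1-q}\exp\big(-\int_0^t c(s)\,ds\big)\Big(\int_0^t \exp\big(\int_0^\tau c(s)\,ds\big)\,d\tau\Big)^q\,\underline{k}(t)\,dt=\infty$. -/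
open Filter Set

-- AM-GM helper: if z^2 ≤ x*y then 2z - y ≤ x.
lemma amgm_aux {x y z : ℝ} (hx : 0 ≤ x) (hy : 0 ≤ y) (hz : 0 ≤ z) (h : z ^ 2 ≤ x * y) :
    2 * z - y ≤ x := by
  nlinarith [sq_nonneg (x - y), sq_nonneg (x + y), mul_nonneg hz (add_nonneg hx hy)]

-- growth of w * (log w)^2 is dominated by exp.
lemma loggrow_aux {a v w : ℝ} (ha : 0 < a) (h3 : 3 / a ≤ v) (he : Real.exp 1 ≤ v)
    (hvw : v ≤ w) :
    w * Real.log w ^ 2 ≤ v * Real.log v ^ 2 * Real.exp (a * (w - v)) := by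
  have he1 : (1 : ℝ) ≤ Real.exp 1 := Real.one_le_exp zero_le_one
  have hv1 : (1 : ℝ) ≤ v := le_trans he1 he
  have hv0 : (0 : ℝ) < v := by linarith
  have hw0 : (0 : ℝ) < w := lt_of_lt_of_le hv0 hvw
  have hlv : 1 ≤ Real.log v := by
    rw [← Real.log_exp 1]
    exact Real.log_le_log (Real.exp_pos 1) he
  have hlw : Real.log v ≤ Real.log w := Real.log_le_log hv0 hvw
  set d : ℝ := (w - v) / v with hd_def
  have hd0 : 0 ≤ d := div_nonneg (by linarith) hv0.le
  have hvd : v * d = w - v := by rw [hd_def]; field_simp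
  have hed : d + 1 ≤ Real.exp d := Real.add_one_le_exp d
  have e1 : w ≤ v * Real.exp d := by nlinarith
  have key1 : Real.log w - Real.log v ≤ d := by
    have h1 : Real.log (w / v) ≤ w / v - 1 := Real.log_le_sub_one_of_pos (div_pos hw0 hv0)
    have h2 : Real.log (w / v) = Real.log w - Real.log v :=
      Real.log_div hw0.ne' hv0.ne'
    have h3 : w / v - 1 = d := by rw [hd_def]; field_simp
    linarith
  have e2 : Real.log w ≤ Real.log v * Real.exp d := by nlinarith
  have e3 : w * Real.log w ^ 2 ≤ (v * Real.exp d) * (Real.log v * Real.exp d) ^ 2 := by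
    have hlw0 : 0 ≤ Real.log w := by linarith
    have h1 : Real.log w ^ 2 ≤ (Real.log v * Real.exp d) ^ 2 := by
      apply pow_le_pow_left₀ hlw0 e2 2
    have h2 : (0:ℝ) ≤ (Real.log v * Real.exp d) ^ 2 := sq_nonneg _
    nlinarith [Real.exp_pos d, mul_pos hv0 (Real.exp_pos d)]
  have e4 : (v * Real.exp d) * (Real.log v * Real.exp d) ^ 2
      = v * Real.log v ^ 2 * Real.exp (3 * d) := by
    have : Real.exp (3 * d) = Real.exp d * (Real.exp d * Real.exp d) := by
      rw [← Real.exp_add, ← Real.exp_add]; ring_nf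
    rw [this]; ring
  have e5 : Real.exp (3 * d) ≤ Real.exp (a * (w - v)) := by
    apply Real.exp_le_exp.mpr
    have h3v : 3 / v ≤ a := by
      rw [div_le_iff₀ hv0]
      have : 3 ≤ a * v := by
        have := (div_le_iff₀ ha).mp h3
        linarith
      linarith
    have : 3 * d = (3 / v) * (w - v) := by rw [hd_def]; field_simp
    rw [this]
    apply mul_le_mul_of_nonneg_right h3v (by linarith)
  calc w * Real.log w ^ 2 ≤ (v * Real.exp d) * (Real.log v * Real.exp d) ^ 2 := e3
    _ = v * Real.log v ^ 2 * Real.exp (3 * d) := e4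
    _ ≤ v * Real.log v ^ 2 * Real.exp (a * (w - v)) := by
        apply mul_le_mul_of_nonneg_left e5
        positivity


set_option maxHeartbeats 1000000 in
private lemma aux_div (q β c6 T0 : ℝ) (hq : 1 < q) (hβ : 0 < β) (hc6 : 0 < c6) (hT0 : 1 < T0)
    (k F G : ℝ → ℝ) (hk : Continuous k) (hk0 : ∀ t, 0 ≤ k t)
    (hkl : ∀ t ≥ T0, c6 * t ^ (-(β * (q - 1) + 2)) * (Real.log t)⁻¹ ≤ k t)
    (hFcont : Continuous F)
    (hGderiv : ∀ x, HasDerivAt G (Real.exp (F x)) x)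
    (hGt : ∀ t, 0 ≤ t → t ≤ G t)
    (hGlb : ∀ t, 2 * T0 ≤ t → (((2:ℝ) ^ (1 + β) * T0 ^ β)⁻¹) * t ^ (1 + β) ≤ G t) :
    Tendsto (fun T => ∫ t in T0..T, t ^ (1 - q) * Real.exp (-F t) * G t ^ q * k t)
      atTop atTop := by
  have ha : 0 < q - 1 := by linarith
  have hT0' : (0:ℝ) < T0 := by linarith
  set A : ℝ := ((2:ℝ) ^ (1 + β) * T0 ^ β)⁻¹ with hA_def
  have h2β : (0:ℝ) < (2:ℝ) ^ (1 + β) := Real.rpow_pos_of_pos two_pos _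
  have hT0β : (0:ℝ) < T0 ^ β := Real.rpow_pos_of_pos hT0' _
  have hA0 : 0 < A := by rw [hA_def]; positivity
  have hA1 : A ≤ 1 := by
    rw [hA_def]
    apply inv_le_one_of_one_le₀
    have h2 : (1:ℝ) ≤ (2:ℝ) ^ (1 + β) := Real.one_le_rpow (by norm_num) (by linarith)
    have h3 : (1:ℝ) ≤ T0 ^ β := Real.one_le_rpow hT0.le hβ.le
    nlinarith
  have hlogA : Real.log A ≤ 0 := Real.log_nonpos hA0.le hA1
  have hGcont : Continuous G := by
    rw [continuous_iff_continuousAt]; exact fun x => (hGderiv x).continuousAt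
  have hGpos : ∀ t, 0 < t → 0 < G t := fun t ht => lt_of_lt_of_le ht (hGt t ht.le)
  set v : ℝ → ℝ := fun t => Real.log A + (1 + β) * Real.log t with hv_def
  obtain ⟨T₁, hT₁⟩ : ∃ T₁, ∀ t ≥ T₁, 2 * T0 ≤ t ∧ 3 / (q-1) ≤ v t ∧ Real.exp 1 ≤ v t ∧
      1 ≤ Real.log (Real.log t) ∧ Real.log (1 + β) ≤ Real.log (Real.log t) := by
    have h1 : Tendsto (fun t : ℝ => (1 + β) * Real.log t) atTop atTop :=
      Real.tendsto_log_atTop.const_mul_atTop (by linarith)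
    have hv : Tendsto v atTop atTop := by
      rw [hv_def]; exact tendsto_atTop_add_const_left _ _ h1
    have hll : Tendsto (fun t : ℝ => Real.log (Real.log t)) atTop atTop :=
      Real.tendsto_log_atTop.comp Real.tendsto_log_atTop
    have hev := ((eventually_ge_atTop (2*T0)).and ((hv.eventually_ge_atTop (3/(q-1))).and
      ((hv.eventually_ge_atTop (Real.exp 1)).and ((hll.eventually_ge_atTop 1).and
      (hll.eventually_ge_atTop (Real.log (1+β)))))))
    obtain ⟨T₁, hT₁⟩ := eventually_atTop.mp hev
    exact ⟨T₁, fun t ht => by obtain ⟨a1,a2,a3,a4,a5⟩ := hT₁ t ht; exact ⟨a1,a2,a3,a4,a5⟩⟩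
  have hfact : ∀ t, T₁ ≤ t → 0 < t ∧ 0 < Real.log t ∧ 1 ≤ Real.log (Real.log t) ∧ 0 < G t ∧
      Real.exp 1 ≤ Real.log (G t) ∧ 1 ≤ Real.log (Real.log (G t)) ∧ v t ≤ Real.log (G t) := by
    intro t ht
    obtain ⟨h1, h2, h3, h4, h5⟩ := hT₁ t ht
    have ht0 : 0 < t := by linarith
    have ht1 : 1 < t := by linarith
    have hlt : 0 < Real.log t := Real.log_pos ht1
    have hGt0 : 0 < G t := hGpos t ht0
    have hvw : v t ≤ Real.log (G t) := by
      have hlb := hGlb t h1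
      have hA_t_pos : 0 < A * t ^ (1+β) := by positivity
      have hlog := Real.log_le_log hA_t_pos hlb
      rwa [Real.log_mul hA0.ne' (by positivity : (t:ℝ)^(1+β) ≠ 0), Real.log_rpow ht0] at hlog
    have hge : Real.exp 1 ≤ Real.log (G t) := le_trans h3 hvw
    have hllG : 1 ≤ Real.log (Real.log (G t)) := by
      calc (1:ℝ) = Real.log (Real.exp 1) := (Real.log_exp 1).symm
      _ ≤ Real.log (Real.log (G t)) := Real.log_le_log (Real.exp_pos 1) hge
    exact ⟨ht0, hlt, h4, hGt0, hge, hllG, hvw⟩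
  have hT0T₁ : T0 ≤ T₁ := by
    have := (hT₁ T₁ le_rfl).1; linarith
  set c5 : ℝ := c6 * A ^ (q-1) / (4 * (1+β)) with hc5_def
  have hA_rpow_pos : 0 < A ^ (q-1) := Real.rpow_pos_of_pos hA0 _
  have hc50 : 0 < c5 := div_pos (mul_pos hc6 hA_rpow_pos) (by linarith)
  set s : ℝ := Real.sqrt c5 with hs_def
  have hs0 : 0 < s := Real.sqrt_pos.mpr hc50
  set ρ : ℝ → ℝ := fun t => t ^ (1 - q) * Real.exp (-F t) * G t ^ q * k t with hρ_def
  set ψ : ℝ → ℝ := fun t =>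
    Real.exp (F t) / G t / Real.log (G t) / Real.log (Real.log (G t)) ^ 2 with hψ_def
  set φ : ℝ → ℝ := fun t => s * (t⁻¹ / Real.log t / Real.log (Real.log t)) with hφ_def
  have hρ_nonneg : ∀ t, 0 < t → 0 ≤ ρ t := by
    intro t ht
    simp only [hρ_def]
    have hG0 : 0 ≤ G t := (hGpos t ht).le
    exact mul_nonneg (mul_nonneg (mul_nonneg (Real.rpow_nonneg ht.le _)
      (Real.exp_pos _).le) (Real.rpow_nonneg hG0 q)) (hk0 t)
  have hψ_pos : ∀ t, T₁ ≤ t → 0 < ψ t := by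
    intro t ht
    obtain ⟨ht0, hlt, hllt, hG0, hge, hllG, hvw⟩ := hfact t ht
    have hw0 : 0 < Real.log (G t) := lt_of_lt_of_le (Real.exp_pos 1) hge
    have hLw0 : 0 < Real.log (Real.log (G t)) := by linarith
    simp only [hψ_def]
    positivity
  have hφ_nonneg : ∀ t, T₁ ≤ t → 0 ≤ φ t := by
    intro t ht
    obtain ⟨ht0, hlt, hllt, _, _, _, _⟩ := hfact t ht
    have hllt0 : 0 < Real.log (Real.log t) := by linarith
    simp only [hφ_def]
    positivity
  -- KEY pointwise inequality
  have hkey : ∀ t, T₁ ≤ t → φ t ^ 2 ≤ ρ t * ψ t := by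
    intro t ht
    obtain ⟨ht0, hlt, hllt, hG0, hge, hllG, hvw⟩ := hfact t ht
    obtain ⟨h2T0, h3a, hev, h1ll, hβll⟩ := hT₁ t ht
    have hT0t : T0 ≤ t := by linarith
    have hw0 : 0 < Real.log (G t) := lt_of_lt_of_le (Real.exp_pos 1) hge
    have hLw1 : 1 ≤ Real.log (Real.log (G t)) := hllG
    have hLw0 : 0 < Real.log (Real.log (G t)) := by linarith
    have hllt0 : 0 < Real.log (Real.log t) := by linarith
    -- Step 1
    have hGq : G t ^ q = G t ^ (q - 1) * G t := by
      have h := Real.rpow_add_one hG0.ne' (q - 1)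
      rw [sub_add_cancel] at h
      exact h
    have step1 : ρ t * ψ t
        = (t ^ (1-q) * k t) * (G t ^ (q-1) / (Real.log (G t) * Real.log (Real.log (G t)) ^ 2)) := by
      simp only [hρ_def, hψ_def]
      rw [Real.exp_neg, hGq]
      field_simp
    -- Step 2 : lower bounds
    have hkb := hkl t hT0t
    have hGa_pos : 0 < G t ^ (q-1) := Real.rpow_pos_of_pos hG0 _
    have hv0 : 0 < v t := lt_of_lt_of_le (Real.exp_pos 1) hev
    have hlv1 : 1 ≤ Real.log (v t) := by
      calc (1:ℝ) = Real.log (Real.exp 1) := (Real.log_exp 1).symm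
      _ ≤ Real.log (v t) := Real.log_le_log (Real.exp_pos 1) hev
    have hvub : v t ≤ (1+β) * Real.log t := by
      simp only [hv_def]; linarith
    have hlogvub : Real.log (v t) ≤ 2 * Real.log (Real.log t) := by
      have h1 : Real.log (v t) ≤ Real.log ((1+β) * Real.log t) := Real.log_le_log hv0 hvub
      rw [Real.log_mul (by linarith : (1+β:ℝ) ≠ 0) hlt.ne'] at h1
      linarith
    have hden : v t * Real.log (v t) ^ 2 ≤ (1+β) * Real.log t * (2 * Real.log (Real.log t))^2 := by
      have h2 : Real.log (v t) ^ 2 ≤ (2 * Real.log (Real.log t))^2 :=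
        pow_le_pow_left₀ (by linarith) hlogvub 2
      have h4 : (0:ℝ) ≤ Real.log (v t) ^ 2 := sq_nonneg _
      nlinarith
    have hlg := loggrow_aux ha h3a hev hvw
    have hGa : G t ^ (q-1) = Real.exp ((q-1) * Real.log (G t)) := by
      rw [Real.rpow_def_of_pos hG0]; ring_nf
    have hQ : Real.exp ((q-1) * v t) / (v t * Real.log (v t) ^ 2)
        ≤ G t ^ (q-1) / (Real.log (G t) * Real.log (Real.log (G t)) ^ 2) := by
      have hd1 : 0 < v t * Real.log (v t) ^ 2 :=
        mul_pos hv0 (pow_pos (lt_of_lt_of_le one_pos hlv1) 2)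
      have hd2 : 0 < Real.log (G t) * Real.log (Real.log (G t)) ^ 2 :=
        mul_pos hw0 (pow_pos hLw0 2)
      rw [hGa, div_le_div_iff₀ hd1 hd2]
      calc Real.exp ((q-1) * v t) * (Real.log (G t) * Real.log (Real.log (G t)) ^ 2)
          ≤ Real.exp ((q-1) * v t) *
            (v t * Real.log (v t)^2 * Real.exp ((q-1)*(Real.log (G t) - v t))) := by
            apply mul_le_mul_of_nonneg_left hlg (Real.exp_pos _).le
        _ = Real.exp ((q-1) * Real.log (G t)) * (v t * Real.log (v t) ^ 2) := by
            rw [show Real.exp ((q-1)*v t) *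
                (v t * Real.log (v t)^2 * Real.exp ((q-1)*(Real.log (G t) - v t)))
              = (Real.exp ((q-1)*v t) * Real.exp ((q-1)*(Real.log (G t) - v t)))
                * (v t * Real.log (v t)^2) from by ring, ← Real.exp_add]
            ring_nf
    have hev_val : Real.exp ((q-1) * v t) = A ^ (q-1) * t ^ ((1+β)*(q-1)) := by
      simp only [hv_def]
      rw [mul_add, Real.exp_add]
      congr 1
      · rw [Real.rpow_def_of_pos hA0]; ring_nf
      · rw [Real.rpow_def_of_pos ht0]; ring_nf
    have hQ2 : A ^ (q-1) * t ^ ((1+β)*(q-1)) / ((1+β) * Real.log t * (2 * Real.log (Real.log t))^2)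
        ≤ G t ^ (q-1) / (Real.log (G t) * Real.log (Real.log (G t)) ^ 2) := by
      refine le_trans ?_ hQ
      rw [← hev_val]
      apply div_le_div_of_nonneg_left (Real.exp_pos _).le (by positivity) -- check order
      · exact hden
    -- combine
    have hcomb : (t ^ (1-q) * (c6 * t ^ (-(β * (q - 1) + 2)) * (Real.log t)⁻¹)) *
        (A ^ (q-1) * t ^ ((1+β)*(q-1)) / ((1+β) * Real.log t * (2 * Real.log (Real.log t))^2))
        ≤ ρ t * ψ t := by
      rw [step1]
      have h1 : t ^ (1-q) * (c6 * t ^ (-(β * (q - 1) + 2)) * (Real.log t)⁻¹)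
          ≤ t ^ (1-q) * k t :=
        mul_le_mul_of_nonneg_left hkb (Real.rpow_nonneg ht0.le _)
      apply mul_le_mul h1 hQ2 (by positivity) ?_
      have := hk0 t
      positivity
    refine le_trans (le_of_eq ?_) hcomb
    -- φ t ^ 2 = LB
    have hlt' : Real.log t ≠ 0 := hlt.ne'
    have hllt' : Real.log (Real.log t) ≠ 0 := hllt0.ne'
    have htpow : t ^ (1-q) * (t ^ (-(β*(q-1)+2)) * t ^ ((1+β)*(q-1))) = t⁻¹ * t⁻¹ := by
      rw [← Real.rpow_add ht0, ← Real.rpow_add ht0,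
        show (1-q) + (-(β*(q-1)+2) + (1+β)*(q-1)) = -2 by ring,
        show (-2:ℝ) = (-1) + (-1) by norm_num, Real.rpow_add ht0, Real.rpow_neg_one]
    simp only [hφ_def, hs_def]
    rw [mul_pow, Real.sq_sqrt hc50.le, hc5_def]
    rw [show t ^ (1-q) * (c6 * t ^ (-(β * (q - 1) + 2)) * (Real.log t)⁻¹) *
        (A ^ (q-1) * t ^ ((1+β)*(q-1)) / ((1+β) * Real.log t * (2 * Real.log (Real.log t))^2))
      = (c6 * A ^ (q-1)) * (t ^ (1-q) * (t ^ (-(β*(q-1)+2)) * t ^ ((1+β)*(q-1)))) *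
        ((Real.log t)⁻¹ / ((1+β) * Real.log t * (2 * Real.log (Real.log t))^2)) from by ring,
      htpow]
    field_simp
    ring
  -- pointwise main inequality
  have hmain : ∀ t, T₁ ≤ t → 2 * φ t - ψ t ≤ ρ t := by
    intro t ht
    have ht0 : 0 < t := (hfact t ht).1
    exact amgm_aux (hρ_nonneg t ht0) (hψ_pos t ht).le (hφ_nonneg t ht) (hkey t ht)
  -- continuity
  have hρcont : ContinuousOn ρ (Ici T0) := by
    simp only [hρ_def]
    apply ContinuousOn.mul ?_ hk.continuousOn
    apply ContinuousOn.mul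
    · apply ContinuousOn.mul
      · apply ContinuousOn.rpow_const continuousOn_id
        intro x hx
        exact Or.inl (by simp; intro h; rw [h] at hx; simp [mem_Ici] at hx; linarith)
      · exact (Real.continuous_exp.comp hFcont.neg).continuousOn
    · apply ContinuousOn.rpow_const hGcont.continuousOn
      intro x hx
      simp only [mem_Ici] at hx
      exact Or.inl (hGpos x (by linarith)).ne'
  have hψcont : ContinuousOn ψ (Ici T₁) := by
    have hG0' : ∀ x ∈ Ici T₁, G x ≠ 0 := fun x hx => ((hfact x hx).2.2.2.1).ne'
    have hlogG : ContinuousOn (fun x => Real.log (G x)) (Ici T₁) :=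
      hGcont.continuousOn.log hG0'
    have hlogG0 : ∀ x ∈ Ici T₁, Real.log (G x) ≠ 0 := fun x hx =>
      (lt_of_lt_of_le (Real.exp_pos 1) (hfact x hx).2.2.2.2.1).ne'
    have hllogG : ContinuousOn (fun x => Real.log (Real.log (G x))) (Ici T₁) :=
      hlogG.log hlogG0
    have hllogG0 : ∀ x ∈ Ici T₁, Real.log (Real.log (G x)) ≠ 0 := fun x hx => by
      have := (hfact x hx).2.2.2.2.2.1; intro h; rw [h] at this; linarith
    simp only [hψ_def]
    exact (((((Real.continuous_exp.comp hFcont).continuousOn).div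
      hGcont.continuousOn hG0').div hlogG hlogG0).div (hllogG.pow 2)
      (fun x hx => pow_ne_zero 2 (hllogG0 x hx)))
  have hφcont : ContinuousOn φ (Ici T₁) := by
    have ht0' : ∀ x ∈ Ici T₁, (x:ℝ) ≠ 0 := fun x hx => ((hfact x hx).1).ne'
    have hlt0' : ∀ x ∈ Ici T₁, Real.log x ≠ 0 := fun x hx => ((hfact x hx).2.1).ne'
    have hllt0' : ∀ x ∈ Ici T₁, Real.log (Real.log x) ≠ 0 := fun x hx => by
      have := (hfact x hx).2.2.1; intro h; rw [h] at this; linarith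
    have hlogc : ContinuousOn (fun x : ℝ => Real.log x) (Ici T₁) :=
      continuousOn_id.log ht0'
    have hllogc : ContinuousOn (fun x : ℝ => Real.log (Real.log x)) (Ici T₁) :=
      hlogc.log hlt0'
    simp only [hφ_def]
    exact continuousOn_const.mul (((continuousOn_id.inv₀ ht0').div hlogc hlt0').div
      hllogc hllt0')
  -- main estimate for T ≥ T₁
  have hlow : ∀ T, T₁ ≤ T → (∫ t in T0..T₁, ρ t) +
      (2*(s * Real.log (Real.log (Real.log T)) - s * Real.log (Real.log (Real.log T₁))) - 1)
      ≤ ∫ t in T0..T, ρ t := by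
    intro T hT
    have hIcc : uIcc T₁ T = Icc T₁ T := uIcc_of_le hT
    have hρi1 : IntervalIntegrable ρ MeasureTheory.volume T0 T₁ := by
      apply ContinuousOn.intervalIntegrable
      apply hρcont.mono
      rw [uIcc_of_le hT0T₁]
      exact Icc_subset_Ici_self
    have hρi2 : IntervalIntegrable ρ MeasureTheory.volume T₁ T := by
      apply ContinuousOn.intervalIntegrable
      apply hρcont.mono
      rw [hIcc]
      exact fun x hx => le_trans hT0T₁ hx.1
    have hψi : IntervalIntegrable ψ MeasureTheory.volume T₁ T := by
      apply ContinuousOn.intervalIntegrable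
      apply hψcont.mono; rw [hIcc]; exact Icc_subset_Ici_self
    have hφi : IntervalIntegrable φ MeasureTheory.volume T₁ T := by
      apply ContinuousOn.intervalIntegrable
      apply hφcont.mono; rw [hIcc]; exact Icc_subset_Ici_self
    have hsplit : (∫ t in T0..T₁, ρ t) + (∫ t in T₁..T, ρ t) = ∫ t in T0..T, ρ t :=
      intervalIntegral.integral_add_adjacent_intervals hρi1 hρi2
    have hmono : (∫ t in T₁..T, (2 * φ t - ψ t)) ≤ ∫ t in T₁..T, ρ t := by
      apply intervalIntegral.integral_mono_on hT ((hφi.const_mul 2).sub hψi) hρi2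
      exact fun x hx => hmain x hx.1
    have heq1 : (∫ t in T₁..T, (2 * φ t - ψ t))
        = 2*(∫ t in T₁..T, φ t) - ∫ t in T₁..T, ψ t := by
      rw [intervalIntegral.integral_sub (hφi.const_mul 2) hψi,
        intervalIntegral.integral_const_mul]
    have hφint : (∫ t in T₁..T, φ t)
        = s * Real.log (Real.log (Real.log T)) - s * Real.log (Real.log (Real.log T₁)) := by
      have := intervalIntegral.integral_eq_sub_of_hasDerivAt
        (f := fun u => s * Real.log (Real.log (Real.log u))) (f' := φ) (a := T₁) (b := T)
        ?_ hφi
      · exact this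
      · intro x hx
        rw [hIcc] at hx
        obtain ⟨hx0, hlx, hllx1, _, _, _, _⟩ := hfact x hx.1
        have hllxpos : 0 < Real.log (Real.log x) := by linarith
        have h1 : HasDerivAt Real.log x⁻¹ x := Real.hasDerivAt_log hx0.ne'
        have h2 : HasDerivAt (fun y : ℝ => Real.log (Real.log y)) (x⁻¹ / Real.log x) x :=
          h1.log hlx.ne'
        have h3 : HasDerivAt (fun y : ℝ => Real.log (Real.log (Real.log y)))
            (x⁻¹ / Real.log x / Real.log (Real.log x)) x := h2.log hllxpos.ne'
        have h4 := h3.const_mul s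
        simpa only [hφ_def] using h4
    have hψint : (∫ t in T₁..T, ψ t)
        = -(Real.log (Real.log (G T)))⁻¹ - -(Real.log (Real.log (G T₁)))⁻¹ := by
      have := intervalIntegral.integral_eq_sub_of_hasDerivAt
        (f := fun u => -(Real.log (Real.log (G u)))⁻¹) (f' := ψ) (a := T₁) (b := T)
        ?_ hψi
      · exact this
      · intro x hx
        rw [hIcc] at hx
        obtain ⟨hx0, _, _, hGx, hgex, hllGx, _⟩ := hfact x hx.1
        have hw0 : 0 < Real.log (G x) := lt_of_lt_of_le (Real.exp_pos 1) hgex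
        have hLw0 : 0 < Real.log (Real.log (G x)) := by linarith
        have h1 : HasDerivAt (fun y => Real.log (G y)) (Real.exp (F x) / G x) x :=
          (hGderiv x).log hGx.ne'
        have h2 : HasDerivAt (fun y => Real.log (Real.log (G y)))
            (Real.exp (F x) / G x / Real.log (G x)) x := h1.log hw0.ne'
        have h3 := (h2.inv hLw0.ne').neg
        convert h3 using 1
        · rfl
        simp only [hψ_def]
        field_simp
    have hψb : (∫ t in T₁..T, ψ t) ≤ 1 := by
      rw [hψint]
      have h1 : 1 ≤ Real.log (Real.log (G T₁)) := (hfact T₁ le_rfl).2.2.2.2.2.1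
      have h2 : 1 ≤ Real.log (Real.log (G T)) := (hfact T hT).2.2.2.2.2.1
      have h3 : (Real.log (Real.log (G T₁)))⁻¹ ≤ 1 := inv_le_one_of_one_le₀ h1
      have h4 : 0 ≤ (Real.log (Real.log (G T)))⁻¹ := by positivity
      linarith
    rw [← hsplit]
    have := le_trans (le_of_eq (by rw [heq1, hφint])) hmono
    linarith [this, hψb, heq1, hφint, hmono]
  -- conclusion
  have hlll : Tendsto (fun T : ℝ => Real.log (Real.log (Real.log T))) atTop atTop :=
    Real.tendsto_log_atTop.comp (Real.tendsto_log_atTop.comp Real.tendsto_log_atTop)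
  have hb : Tendsto (fun T => (∫ t in T0..T₁, ρ t) +
      (2*(s * Real.log (Real.log (Real.log T)) - s * Real.log (Real.log (Real.log T₁))) - 1))
      atTop atTop := by
    apply tendsto_atTop_add_const_left
    apply tendsto_atTop_add_const_right
    have heq : (fun T : ℝ => 2*(s * Real.log (Real.log (Real.log T))
        - s * Real.log (Real.log (Real.log T₁))))
        = fun T : ℝ => (2*s) * Real.log (Real.log (Real.log T))
          + (-(2 * (s * Real.log (Real.log (Real.log T₁))))) := by
      funext T; ring
    rw [heq]
    apply tendsto_atTop_add_const_right
    exact hlll.const_mul_atTop (by linarith)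
  apply tendsto_atTop_mono' atTop ?_ hb
  filter_upwards [eventually_ge_atTop T₁] with T hT
  exact hlow T hT

set_option maxHeartbeats 1000000 in
theorem divergence_condition_p_one
    (q β c6 T0 : ℝ) (hq : 1 < q) (hβ : 0 < β) (hc6 : 0 < c6) (hT0 : 1 < T0)
    (c k : ℝ → ℝ) (hc : Continuous c) (hk : Continuous k)
    (hc0 : ∀ t, 0 ≤ c t) (hk0 : ∀ t, 0 ≤ k t)
    (hcl : ∀ t ≥ T0, β / t ≤ c t)
    (hkl : ∀ t ≥ T0, c6 * t ^ (-(β * (q - 1) + 2)) * (Real.log t)⁻¹ ≤ k t) :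
    Tendsto (fun T => ∫ t in T0..T,
        t ^ (1 - q) * Real.exp (-∫ s in (0:ℝ)..t, c s) *
          (∫ τ in (0:ℝ)..t, Real.exp (∫ s in (0:ℝ)..τ, c s)) ^ q * k t)
      atTop atTop := by
  have hT0' : (0:ℝ) < T0 := by linarith
  set F : ℝ → ℝ := fun t => ∫ s in (0:ℝ)..t, c s with hF_def
  set G : ℝ → ℝ := fun t => ∫ τ in (0:ℝ)..t, Real.exp (F τ) with hG_def
  have hFcont : Continuous F :=
    intervalIntegral.continuous_primitive (fun a b => hc.intervalIntegrable a b) 0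
  have hFnn : ∀ t, 0 ≤ t → 0 ≤ F t := fun t ht =>
    intervalIntegral.integral_nonneg ht (fun u _ => hc0 u)
  have hexpFcont : Continuous fun t => Real.exp (F t) := Real.continuous_exp.comp hFcont
  have hGderiv : ∀ x, HasDerivAt G (Real.exp (F x)) x := fun x =>
    (hexpFcont.integral_hasStrictDerivAt 0 x).hasDerivAt
  have hGt : ∀ t, 0 ≤ t → t ≤ G t := by
    intro t ht
    have h1 : ∫ τ in (0:ℝ)..t, (1:ℝ) ≤ ∫ τ in (0:ℝ)..t, Real.exp (F τ) :=
      intervalIntegral.integral_mono_on ht intervalIntegrable_const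
        (hexpFcont.intervalIntegrable _ _) (fun x hx => Real.one_le_exp (hFnn x hx.1))
    simpa using h1
  have hFlb : ∀ τ, T0 ≤ τ → β * (Real.log τ - Real.log T0) ≤ F τ := by
    intro τ hτ
    have hτ0 : 0 < τ := lt_of_lt_of_le hT0' hτ
    have hbsi : IntervalIntegrable (fun s : ℝ => β * s⁻¹) MeasureTheory.volume T0 τ := by
      apply ContinuousOn.intervalIntegrable
      apply ContinuousOn.mul continuousOn_const
      apply ContinuousOn.inv₀ continuousOn_id
      intro x hx
      rw [uIcc_of_le hτ] at hx
      have hx0 : 0 < x := lt_of_lt_of_le hT0' hx.1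
      simpa using hx0.ne'
    have h1 : (∫ s in T0..τ, β * s⁻¹) ≤ ∫ s in T0..τ, c s := by
      apply intervalIntegral.integral_mono_on hτ hbsi (hc.intervalIntegrable _ _)
      intro x hx
      have := hcl x hx.1
      rw [div_eq_mul_inv] at this
      exact this
    have h2 : (∫ s in T0..τ, β * s⁻¹) = β * (Real.log τ - Real.log T0) := by
      rw [intervalIntegral.integral_const_mul, integral_inv_of_pos hT0' hτ0,
        Real.log_div hτ0.ne' hT0'.ne']
    have h3 : F τ = (∫ s in (0:ℝ)..T0, c s) + ∫ s in T0..τ, c s :=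
      (intervalIntegral.integral_add_adjacent_intervals (hc.intervalIntegrable _ _)
        (hc.intervalIntegrable _ _)).symm
    have h4 : 0 ≤ ∫ s in (0:ℝ)..T0, c s :=
      intervalIntegral.integral_nonneg hT0'.le (fun u _ => hc0 u)
    rw [h3]
    linarith
  have hexpFlb : ∀ τ, T0 ≤ τ → (τ / T0) ^ β ≤ Real.exp (F τ) := by
    intro τ hτ
    have hτ0 : 0 < τ := lt_of_lt_of_le hT0' hτ
    rw [Real.rpow_def_of_pos (div_pos hτ0 hT0'), Real.log_div hτ0.ne' hT0'.ne']
    apply Real.exp_le_exp.mpr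
    rw [mul_comm]
    exact hFlb τ hτ
  have hGlb : ∀ t, 2 * T0 ≤ t → (((2:ℝ) ^ (1 + β) * T0 ^ β)⁻¹) * t ^ (1 + β) ≤ G t := by
    intro t ht
    have ht0 : (0:ℝ) < t := by linarith
    have ht2 : T0 ≤ t / 2 := by linarith
    have ht2' : (0:ℝ) < t / 2 := by linarith
    have hsplit : G t = (∫ τ in (0:ℝ)..(t/2), Real.exp (F τ))
        + ∫ τ in (t/2)..t, Real.exp (F τ) :=
      (intervalIntegral.integral_add_adjacent_intervals (hexpFcont.intervalIntegrable _ _)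
        (hexpFcont.intervalIntegrable _ _)).symm
    have h1 : 0 ≤ ∫ τ in (0:ℝ)..(t/2), Real.exp (F τ) :=
      intervalIntegral.integral_nonneg (by linarith) (fun u _ => (Real.exp_pos _).le)
    have h2 : (∫ τ in (t/2)..t, ((t/2)/T0 : ℝ) ^ β) ≤ ∫ τ in (t/2)..t, Real.exp (F τ) := by
      apply intervalIntegral.integral_mono_on (by linarith) intervalIntegrable_const
        (hexpFcont.intervalIntegrable _ _)
      intro x hx
      refine le_trans ?_ (hexpFlb x (le_trans ht2 hx.1))
      apply Real.rpow_le_rpow (by positivity) ?_ hβ.le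
      exact (div_le_div_iff_of_pos_right hT0').mpr hx.1
    have h3 : (∫ τ in (t/2)..t, ((t/2)/T0 : ℝ) ^ β) = (t - t/2) * ((t/2)/T0) ^ β := by
      simp [intervalIntegral.integral_const, smul_eq_mul]
    have h4 : (((2:ℝ) ^ (1 + β) * T0 ^ β)⁻¹) * t ^ (1 + β) = (t - t/2) * ((t/2)/T0) ^ β := by
      have e1 : ((t/2)/T0 : ℝ) ^ β = t ^ β / ((2:ℝ) ^ β * T0 ^ β) := by
        rw [Real.div_rpow (by linarith : (0:ℝ) ≤ t/2) hT0'.le,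
          Real.div_rpow ht0.le (by norm_num : (0:ℝ) ≤ 2)]
        ring
      have h2β : ((2:ℝ) ^ β) ≠ 0 := (Real.rpow_pos_of_pos two_pos β).ne'
      have hT0β : (T0 : ℝ) ^ β ≠ 0 := (Real.rpow_pos_of_pos hT0' β).ne'
      have htβ : (t : ℝ) ^ β ≠ 0 := (Real.rpow_pos_of_pos ht0 β).ne'
      rw [e1, show (1 + β) = (1:ℝ) + β from rfl, Real.rpow_add ht0 1 β,
        Real.rpow_add two_pos 1 β, Real.rpow_one, Real.rpow_one]
      field_simp
      ring
    rw [hsplit, h4]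
    linarith
  exact aux_div q β c6 T0 hq hβ hc6 hT0 k F G hk hk0 hkl hFcont hGderiv hGt hGlb
end

section
/- Let $q>1$, $\omega>0$, $\gamma>0$, $c_7>0$. Suppose $c:[0,\infty)\to[0,\infty)$ is continuous with $c(t)\le\omega/t$ for all $t\ge T_0>1$, and $k:[0,\infty)\to[0,\infty)$ is continuous with $k(t)\le c_7\, t^{-(\omega(q-1)+2)}(\ln t)^{-1-\gamma}$ for all $t\ge T_0$. Then $\int_0^\infty k(t)\exp\big(-\int_0^t c(s)\,ds\big)\int_0^t \exp\big(q\int_0^\tau c(s)\,ds\big)\,d\tau\,dt<\infty$. -/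
open Filter Set MeasureTheory Topology

/-- Integrability of `x⁻¹ * (log x)^(-(1+γ))` on `(T0, ∞)` for `T0 > 1`, `γ > 0`. -/
lemma aux_log_integrable (γ T0 : ℝ) (hγ : 0 < γ) (hT0 : 1 < T0) :
    IntegrableOn (fun x : ℝ => x⁻¹ * Real.log x ^ (-(1 + γ))) (Ioi T0) := by
  have hderiv : ∀ x ∈ Ici T0,
      HasDerivAt (fun x : ℝ => -(Real.log x) ^ (-γ) / γ)
        (x⁻¹ * Real.log x ^ (-(1 + γ))) x := by
    intro x hx
    have hx1 : 1 < x := lt_of_lt_of_le hT0 hx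
    have hx0 : x ≠ 0 := by positivity
    have hlogpos : 0 < Real.log x := Real.log_pos hx1
    have h1 : HasDerivAt Real.log x⁻¹ x := Real.hasDerivAt_log hx0
    have h2 : HasDerivAt (fun y : ℝ => y ^ (-γ))
        ((-γ) * Real.log x ^ (-γ - 1)) (Real.log x) :=
      Real.hasDerivAt_rpow_const (Or.inl hlogpos.ne')
    have h3 := (h2.comp x h1).neg.div_const γ
    refine h3.congr_deriv ?_
    have he : -γ - 1 = -(1 + γ) := by ring
    rw [he]
    field_simp
  have hpos : ∀ x ∈ Ioi T0, 0 ≤ x⁻¹ * Real.log x ^ (-(1 + γ)) := by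
    intro x hx
    have hx1 : 1 < x := lt_trans hT0 hx
    have : 0 < Real.log x := Real.log_pos hx1
    positivity
  have htend : Tendsto (fun x : ℝ => -(Real.log x) ^ (-γ) / γ) atTop (𝓝 0) := by
    have h := ((tendsto_rpow_neg_atTop hγ).comp Real.tendsto_log_atTop).neg.div_const γ
    simpa using h
  exact integrableOn_Ioi_deriv_of_nonneg' hderiv hpos htend

theorem convergence_condition_p_one
    (q ω γ c7 T0 : ℝ) (hq : 1 < q) (hω : 0 < ω) (hγ : 0 < γ) (hc7 : 0 < c7)
    (hT0 : 1 < T0)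
    (c k : ℝ → ℝ) (hc : Continuous c) (hk : Continuous k)
    (hc0 : ∀ t, 0 ≤ c t) (hk0 : ∀ t, 0 ≤ k t)
    (hcu : ∀ t ≥ T0, c t ≤ ω / t)
    (hku : ∀ t ≥ T0, k t ≤ c7 * t ^ (-(ω * (q - 1) + 2)) * (Real.log t) ^ (-(1 + γ))) :
    IntegrableOn (fun t =>
        k t * Real.exp (-∫ s in (0:ℝ)..t, c s) *
          ∫ τ in (0:ℝ)..t, Real.exp (q * ∫ s in (0:ℝ)..τ, c s))
      (Set.Ici 0) := by
  set C : ℝ → ℝ := fun t => ∫ s in (0:ℝ)..t, c s with hCdef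
  have hcint : ∀ a b : ℝ, IntervalIntegrable c volume a b :=
    fun a b => hc.intervalIntegrable a b
  have hCcont : Continuous C := intervalIntegral.continuous_primitive hcint 0
  have hCmono : Monotone C := by
    intro a b hab
    have hsub : C b - C a = ∫ s in a..b, c s :=
      intervalIntegral.integral_interval_sub_left (hcint 0 b) (hcint 0 a)
    have hnn : 0 ≤ ∫ s in a..b, c s :=
      intervalIntegral.integral_nonneg hab (fun u _ => hc0 u)
    linarith [hsub ▸ hnn]

  have heqcont : Continuous (fun τ : ℝ => Real.exp (q * C τ)) :=
    Real.continuous_exp.comp (continuous_const.mul hCcont)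
  have hfcont : Continuous (fun t =>
      k t * Real.exp (-C t) *
        ∫ τ in (0:ℝ)..t, Real.exp (q * C τ)) := by
    exact (hk.mul (Real.continuous_exp.comp hCcont.neg)).mul
      (intervalIntegral.continuous_primitive (fun a b => heqcont.intervalIntegrable a b) 0)
  have h0T : (0:ℝ) ≤ T0 := by linarith
  have hsplit : Ici (0:ℝ) = Icc 0 T0 ∪ Ioi T0 := (Icc_union_Ioi_eq_Ici h0T).symm
  rw [hsplit]
  apply IntegrableOn.union
  · exact hfcont.integrableOn_Icc
  -- main part: Ioi T0
  have hClog : ∀ t ≥ T0, C t ≤ C T0 + ω * Real.log t := by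
    intro t ht
    have ht0 : 0 < T0 := by linarith
    have htpos : 0 < t := lt_of_lt_of_le ht0 ht
    have hsub : C t - C T0 = ∫ s in T0..t, c s :=
      intervalIntegral.integral_interval_sub_left (hcint 0 t) (hcint 0 T0)
    have hnotmem : (0:ℝ) ∉ uIcc T0 t := by
      rw [Set.uIcc_of_le ht]
      rintro ⟨h1, -⟩; linarith
    have hgint : IntervalIntegrable (fun s => ω * (1/s)) volume T0 t := by
      apply ContinuousOn.intervalIntegrable
      exact continuousOn_const.mul (continuousOn_const.div continuousOn_id
        (fun x hx => ne_of_mem_of_not_mem hx hnotmem))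
    have hmono : (∫ s in T0..t, c s) ≤ ∫ s in T0..t, ω * (1/s) := by
      apply intervalIntegral.integral_mono_on ht (hcint T0 t) hgint
      intro x hx
      have hxpos : 0 < x := lt_of_lt_of_le ht0 hx.1
      have := hcu x hx.1
      rw [mul_one_div]
      linarith [this]
    have hval : (∫ s in T0..t, ω * (1/s)) = ω * Real.log (t / T0) := by
      rw [intervalIntegral.integral_const_mul, integral_one_div hnotmem]
    have hlogdiv : Real.log (t / T0) = Real.log t - Real.log T0 :=
      Real.log_div (by positivity) (by positivity)
    have hlogT0 : 0 ≤ Real.log T0 := Real.log_nonneg (le_of_lt hT0)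
    have : ω * Real.log (t / T0) ≤ ω * Real.log t := by
      rw [hlogdiv]; nlinarith
    linarith [hmono, hval ▸ hmono]
  apply Integrable.mono' (g := fun t =>
      (Real.exp ((q - 1) * C T0) * c7) * (t⁻¹ * Real.log t ^ (-(1 + γ))))
    (((aux_log_integrable γ T0 hγ hT0)).const_mul _)
    (hfcont.aestronglyMeasurable.restrict)
  filter_upwards [ae_restrict_mem measurableSet_Ioi] with t ht
  have ht1 : 1 < t := lt_trans hT0 ht
  have htpos : 0 < t := by linarith
  have htT0 : T0 ≤ t := le_of_lt ht
  have hinn_nonneg : 0 ≤ ∫ τ in (0:ℝ)..t, Real.exp (q * C τ) :=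
    intervalIntegral.integral_nonneg (by linarith) (fun x _ => (Real.exp_pos _).le)
  have hf_nonneg : 0 ≤ k t * Real.exp (-C t) * ∫ τ in (0:ℝ)..t, Real.exp (q * C τ) := by
    apply mul_nonneg (mul_nonneg (hk0 t) (Real.exp_pos _).le) hinn_nonneg
  rw [Real.norm_of_nonneg hf_nonneg]
  -- bound the inner integral by t * exp (q * C t)
  have hinner : (∫ τ in (0:ℝ)..t, Real.exp (q * C τ)) ≤ t * Real.exp (q * C t) := by
    have hconst : (∫ τ in (0:ℝ)..t, Real.exp (q * C t)) = t * Real.exp (q * C t) := by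
      rw [intervalIntegral.integral_const]; simp
    calc (∫ τ in (0:ℝ)..t, Real.exp (q * C τ))
        ≤ ∫ τ in (0:ℝ)..t, Real.exp (q * C t) := by
          apply intervalIntegral.integral_mono_on (by linarith)
            (heqcont.intervalIntegrable 0 t) (intervalIntegrable_const)
          intro x hx
          apply Real.exp_le_exp.2
          exact mul_le_mul_of_nonneg_left (hCmono hx.2) (by linarith)
      _ = t * Real.exp (q * C t) := hconst
  have step1 : k t * Real.exp (-C t) * (∫ τ in (0:ℝ)..t, Real.exp (q * C τ))
      ≤ k t * t * Real.exp ((q - 1) * C t) := by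
    have := mul_le_mul_of_nonneg_left hinner
      (mul_nonneg (hk0 t) (Real.exp_pos (-C t)).le)
    calc k t * Real.exp (-C t) * (∫ τ in (0:ℝ)..t, Real.exp (q * C τ))
        ≤ k t * Real.exp (-C t) * (t * Real.exp (q * C t)) := this
      _ = k t * t * (Real.exp (-C t) * Real.exp (q * C t)) := by ring
      _ = k t * t * Real.exp ((q - 1) * C t) := by
          rw [← Real.exp_add]; ring_nf
  have step2 : Real.exp ((q - 1) * C t)
      ≤ Real.exp ((q - 1) * C T0) * t ^ ((q - 1) * ω) := by
    have h1 : (q - 1) * C t ≤ (q - 1) * (C T0 + ω * Real.log t) :=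
      mul_le_mul_of_nonneg_left (hClog t htT0) (by linarith)
    calc Real.exp ((q - 1) * C t)
        ≤ Real.exp ((q - 1) * (C T0 + ω * Real.log t)) := Real.exp_le_exp.2 h1
      _ = Real.exp ((q - 1) * C T0) * Real.exp ((q - 1) * ω * Real.log t) := by
          rw [← Real.exp_add]; ring_nf
      _ = Real.exp ((q - 1) * C T0) * t ^ ((q - 1) * ω) := by
          rw [Real.rpow_def_of_pos htpos]; ring_nf
  have step3 : k t * t ≤ c7 * t ^ (-(ω * (q - 1) + 2)) * Real.log t ^ (-(1 + γ)) * t :=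
    mul_le_mul_of_nonneg_right (hku t htT0) (le_of_lt htpos)
  have hlogpos : 0 < Real.log t := Real.log_pos ht1
  have hrpow_nonneg : (0:ℝ) ≤ t ^ ((q - 1) * ω) := Real.rpow_nonneg htpos.le _
  have hL_nonneg : (0:ℝ) ≤ Real.log t ^ (-(1 + γ)) := Real.rpow_nonneg hlogpos.le _
  have final : k t * t * Real.exp ((q - 1) * C t)
      ≤ Real.exp ((q - 1) * C T0) * c7 * (t⁻¹ * Real.log t ^ (-(1 + γ))) := by
    have hb1 : k t * t * Real.exp ((q - 1) * C t)
        ≤ k t * t * (Real.exp ((q - 1) * C T0) * t ^ ((q - 1) * ω)) :=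
      mul_le_mul_of_nonneg_left step2 (mul_nonneg (hk0 t) htpos.le)
    have hb2 : k t * t * (Real.exp ((q - 1) * C T0) * t ^ ((q - 1) * ω))
        ≤ (c7 * t ^ (-(ω * (q - 1) + 2)) * Real.log t ^ (-(1 + γ)) * t) *
            (Real.exp ((q - 1) * C T0) * t ^ ((q - 1) * ω)) :=
      mul_le_mul_of_nonneg_right step3
        (mul_nonneg (Real.exp_pos _).le hrpow_nonneg)
    have hpoweq : t ^ (-(ω * (q - 1) + 2)) * t * t ^ ((q - 1) * ω) = t⁻¹ := by
      rw [← Real.rpow_add_one (ne_of_gt htpos), ← Real.rpow_add htpos]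
      have : -(ω * (q - 1) + 2) + 1 + (q - 1) * ω = -1 := by ring
      rw [this, Real.rpow_neg_one]
    calc k t * t * Real.exp ((q - 1) * C t)
        ≤ (c7 * t ^ (-(ω * (q - 1) + 2)) * Real.log t ^ (-(1 + γ)) * t) *
            (Real.exp ((q - 1) * C T0) * t ^ ((q - 1) * ω)) := le_trans hb1 hb2
      _ = Real.exp ((q - 1) * C T0) * c7 *
            ((t ^ (-(ω * (q - 1) + 2)) * t * t ^ ((q - 1) * ω)) *
              Real.log t ^ (-(1 + γ))) := by ring
      _ = Real.exp ((q - 1) * C T0) * c7 * (t⁻¹ * Real.log t ^ (-(1 + γ))) := by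
          rw [hpoweq]
  exact le_trans step1 final
end
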